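/- Approximate-Greedy variant: if at each arrival Greedy only achieves an η-approximation of the maximum marginal value, i.e. Σ_i f_i(ALG_t | ALG(t)) ≥ η · max_{e∈N_t} Σ_i f_i(e | ALG(t)) for all t, then the resulting algorithm is (1 + 1/η)^{−1}-competitive for OSOW with configurations. -/

import Mathlib

/-- `lt`-submodular order for a set function w.r.t. a strict order relation `lt`. -/
def SubmodOrderRel {α : Type*} [DecidableEq α] (lt : α → α → Prop) (f : Finset α → ℝ) : Prop :=
  ∀ A B C : Finset α, B ⊆ A →
    (∀ x ∈ A \ B, ∀ y ∈ B, lt y x) →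
    (∀ c ∈ C, ∀ x ∈ A, lt x c) →
    f (C ∪ A) - f A ≤ f (C ∪ B) - f B

/-- approximate-Greedy variant. Same OSOW-with-configurations setting as
the Greedy theorem, but at each arrival the algorithm only achieves an `η`-approximation
of the maximum total marginal value (`η ∈ (0,1]`); then the algorithm is
`(1 + 1/η)⁻¹`-competitive. -/
theorem stmt_9 {α : Type*} [Fintype α] [DecidableEq α] {ι : Type*} [Fintype ι]
    (n : ℕ) (τ : α → Fin n)
    (N : Fin n → Finset α) (hN : ∀ t, N t = Finset.univ.filter (fun e => τ e = t))
    (f : ι → Finset α → ℝ)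
    (hnonneg : ∀ i S, 0 ≤ f i S)
    (hzero : ∀ i, f i ∅ = 0)
    (hmono : ∀ i, ∀ S₁ S₂ : Finset α, S₁ ⊆ S₂ → f i S₁ ≤ f i S₂)
    (hso : ∀ lt : α → α → Prop, IsStrictTotalOrder α lt →
      (∀ x y, τ x < τ y → lt x y) → ∀ i, SubmodOrderRel lt (f i))
    (hmod : ∀ i t, ∀ S : Finset α, Disjoint S (N t) →
      f i (N t ∪ S) = f i S + ∑ e ∈ N t, (f i (insert e S) - f i S))
    (η : ℝ) (hη0 : 0 < η) (hη1 : η ≤ 1)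
    (ALG : Fin n → α) (hALGmem : ∀ t, ALG t ∈ N t)
    (hgreedy : ∀ t, ∀ e ∈ N t, η *
      ∑ i, (f i (insert e ((Finset.univ.filter (fun s => s < t)).image ALG)) -
            f i ((Finset.univ.filter (fun s => s < t)).image ALG)) ≤
      ∑ i, (f i (insert (ALG t) ((Finset.univ.filter (fun s => s < t)).image ALG)) -
            f i ((Finset.univ.filter (fun s => s < t)).image ALG)))
    (o : Fin n → α) (ho : ∀ t, o t ∈ N t) :
    ∑ i, f i (Finset.univ.image ALG) ≥ (1 + 1 / η)⁻¹ * ∑ i, f i (Finset.univ.image o) := by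
  classical
  -- a strict total order refining the arrival order
  set emb := Fintype.equivFin α with hembdef
  set r : α → α → Prop := fun x y => τ x < τ y ∨ (τ x = τ y ∧ emb x < emb y) with hrdef
  have hsto : IsStrictTotalOrder α r := by
    refine { trichotomous := ?_, irrefl := ?_, trans := ?_ }
    · intro a b
      suffices htri : r a b ∨ a = b ∨ r b a by
        intro hab hba
        rcases htri with h | h | h
        · exact absurd h hab
        · exact h
        · exact absurd h hba
      rcases lt_trichotomy (τ a) (τ b) with h | h | h
      · exact Or.inl (Or.inl h)
      · rcases lt_trichotomy (emb a) (emb b) with h2 | h2 | h2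
        · exact Or.inl (Or.inr ⟨h, h2⟩)
        · exact Or.inr (Or.inl (emb.injective h2))
        · exact Or.inr (Or.inr (Or.inr ⟨h.symm, h2⟩))
      · exact Or.inr (Or.inr (Or.inl h))
    · intro a h
      rcases h with h | ⟨_, h⟩ <;> exact lt_irrefl _ h
    · intro a b c hab hbc
      rcases hab with h1 | ⟨e1, h1⟩ <;> rcases hbc with h2 | ⟨e2, h2⟩
      · exact Or.inl (h1.trans h2)
      · exact Or.inl (e2 ▸ h1)
      · exact Or.inl (e1 ▸ h2)
      · exact Or.inr ⟨e1.trans e2, h1.trans h2⟩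
  have hcomp : ∀ x y, τ x < τ y → r x y := fun x y h => Or.inl h
  have hsub : ∀ i, SubmodOrderRel r (f i) := fun i => hso r hsto hcomp i
  -- arrival times of chosen elements
  have hτA : ∀ s : Fin n, τ (ALG s) = s := by
    intro s
    have := hALGmem s
    rw [hN s, Finset.mem_filter] at this
    exact this.2
  have hτo : ∀ s : Fin n, τ (o s) = s := by
    intro s
    have := ho s
    rw [hN s, Finset.mem_filter] at this
    exact this.2
  -- prefix/suffix sets
  set Aset : ℕ → Finset α :=
    fun k => (Finset.univ.filter (fun s : Fin n => (s : ℕ) < k)).image ALG with hAsetdef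
  set Oset : ℕ → Finset α :=
    fun k => (Finset.univ.filter (fun s : Fin n => k ≤ (s : ℕ))).image o with hOsetdef
  have hA0 : Aset 0 = ∅ := by
    rw [hAsetdef]
    simp
  have hAn : Aset n = Finset.univ.image ALG := by
    rw [hAsetdef]
    congr 1
    ext s
    simpa using s.isLt
  have hOn : Oset n = ∅ := by
    rw [hOsetdef]
    simp only [Finset.image_eq_empty]
    ext s
    simpa using s.isLt
  have hO0 : Oset 0 = Finset.univ.image o := by
    rw [hOsetdef]
    simp
  have hAeq : ∀ t : Fin n,
      Aset (t : ℕ) = (Finset.univ.filter (fun s : Fin n => s < t)).image ALG := by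
    intro t
    congr 1
  have hAsucc : ∀ t : Fin n, Aset ((t : ℕ) + 1) = insert (ALG t) (Aset (t : ℕ)) := by
    intro t
    have hf : (Finset.univ.filter (fun s : Fin n => (s : ℕ) < (t : ℕ) + 1)) =
        insert t (Finset.univ.filter (fun s : Fin n => (s : ℕ) < (t : ℕ))) := by
      ext s
      simp only [Finset.mem_filter, Finset.mem_insert, Finset.mem_univ, true_and]
      constructor
      · intro h
        rcases Nat.lt_succ_iff_lt_or_eq.mp h with h' | h'
        · exact Or.inr h'
        · exact Or.inl (Fin.ext h')
      · rintro (rfl | h)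
        · exact Nat.lt_succ_self _
        · exact Nat.lt_succ_of_lt h
    rw [hAsetdef]
    simp only [hf, Finset.image_insert]
  have hOstep : ∀ t : Fin n, Oset (t : ℕ) = insert (o t) (Oset ((t : ℕ) + 1)) := by
    intro t
    have hf : (Finset.univ.filter (fun s : Fin n => (t : ℕ) ≤ (s : ℕ))) =
        insert t (Finset.univ.filter (fun s : Fin n => (t : ℕ) + 1 ≤ (s : ℕ))) := by
      ext s
      simp only [Finset.mem_filter, Finset.mem_insert, Finset.mem_univ, true_and]
      constructor
      · intro h
        rcases Nat.eq_or_lt_of_le h with h' | h'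
        · exact Or.inl (Fin.ext h'.symm)
        · exact Or.inr h'
      · rintro (rfl | h)
        · exact le_refl _
        · exact Nat.le_of_succ_le h
    rw [hOsetdef]
    simp only [hf, Finset.image_insert]
  -- τ bounds for members
  have hAmemτ : ∀ k, ∀ x ∈ Aset k, ((τ x : ℕ)) < k := by
    intro k x hx
    rw [hAsetdef] at hx
    simp only [Finset.mem_image, Finset.mem_filter, Finset.mem_univ, true_and] at hx
    obtain ⟨s, hs, rfl⟩ := hx
    rw [hτA s]; exact hs
  have hOmemτ : ∀ k, ∀ x ∈ Oset k, k ≤ ((τ x : ℕ)) := by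
    intro k x hx
    rw [hOsetdef] at hx
    simp only [Finset.mem_image, Finset.mem_filter, Finset.mem_univ, true_and] at hx
    obtain ⟨s, hs, rfl⟩ := hx
    rw [hτo s]; exact hs
  -- totals
  set FA : ℕ → ℝ := fun k => ∑ i, f i (Aset k) with hFAdef
  set FO : ℕ → ℝ := fun k => ∑ i, f i (Oset k ∪ Aset k) with hFOdef
  -- per-step inequality
  have hstep : ∀ t : Fin n,
      (FO (t : ℕ) - FA (t : ℕ)) - (FO ((t : ℕ) + 1) - FA ((t : ℕ) + 1)) ≤
      (1 + 1 / η) * (FA ((t : ℕ) + 1) - FA (t : ℕ)) := by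
    intro t
    -- submodular order application, per i
    have key : ∀ i,
        f i (Oset (t : ℕ) ∪ Aset (t : ℕ)) - f i (Aset (t : ℕ)) ≤
        (f i (Oset ((t : ℕ) + 1) ∪ Aset ((t : ℕ) + 1)) - f i (Aset ((t : ℕ) + 1))) +
        ((f i (insert (o t) (Aset (t : ℕ))) - f i (Aset (t : ℕ))) +
         (f i (Aset ((t : ℕ) + 1)) - f i (Aset (t : ℕ)))) := by
      intro i
      have h1 : ∀ x ∈ insert (o t) (Aset (t : ℕ)) \ Aset (t : ℕ),
          ∀ y ∈ Aset (t : ℕ), r y x := by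
        intro x hx y hy
        rw [Finset.mem_sdiff, Finset.mem_insert] at hx
        rcases hx.1 with rfl | hmem
        · apply hcomp
          rw [Fin.lt_def, hτo]
          exact hAmemτ _ y hy
        · exact absurd hmem hx.2
      have h2 : ∀ c ∈ Oset ((t : ℕ) + 1), ∀ x ∈ insert (o t) (Aset (t : ℕ)), r x c := by
        intro c hc x hx
        have hcτ := hOmemτ _ c hc
        rw [Finset.mem_insert] at hx
        apply hcomp
        rw [Fin.lt_def]
        rcases hx with rfl | hmem
        · rw [hτo]; omega
        · have := hAmemτ _ x hmem; omega
      have happ := hsub i (insert (o t) (Aset (t : ℕ))) (Aset (t : ℕ)) (Oset ((t : ℕ) + 1))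
        (Finset.subset_insert _ _) h1 h2
      have hunion : Oset (t : ℕ) ∪ Aset (t : ℕ) =
          Oset ((t : ℕ) + 1) ∪ insert (o t) (Aset (t : ℕ)) := by
        rw [hOstep t, Finset.insert_union, Finset.union_insert]
      have hmon : f i (Oset ((t : ℕ) + 1) ∪ Aset (t : ℕ)) ≤
          f i (Oset ((t : ℕ) + 1) ∪ Aset ((t : ℕ) + 1)) := by
        apply hmono
        apply Finset.union_subset_union_right
        rw [hAsucc t]
        exact Finset.subset_insert _ _
      rw [hunion]
      linarith [happ, hmon]
    -- greedy inequality
    have hg := hgreedy t (o t) (ho t)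
    rw [← hAeq t] at hg
    have hg' : ∑ i, (f i (insert (o t) (Aset (t : ℕ))) - f i (Aset (t : ℕ))) ≤
        (1 / η) * (FA ((t : ℕ) + 1) - FA (t : ℕ)) := by
      have hR : ∑ i, (f i (insert (ALG t) (Aset (t : ℕ))) - f i (Aset (t : ℕ))) =
          FA ((t : ℕ) + 1) - FA (t : ℕ) := by
        simp only [hFAdef]
        rw [hAsucc t, Finset.sum_sub_distrib]
      rw [hR] at hg
      rw [show (1 / η) * (FA ((t : ℕ) + 1) - FA (t : ℕ)) =
        (FA ((t : ℕ) + 1) - FA (t : ℕ)) / η from by ring, le_div_iff₀ hη0]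
      linarith
    have hsum := Finset.sum_le_sum (fun i (_ : i ∈ Finset.univ) => key i)
    rw [Finset.sum_sub_distrib] at hsum
    have hexp : ∑ i, ((f i (Oset ((t : ℕ) + 1) ∪ Aset ((t : ℕ) + 1)) - f i (Aset ((t : ℕ) + 1))) +
        ((f i (insert (o t) (Aset (t : ℕ))) - f i (Aset (t : ℕ))) +
         (f i (Aset ((t : ℕ) + 1)) - f i (Aset (t : ℕ))))) =
        (FO ((t : ℕ) + 1) - FA ((t : ℕ) + 1)) +
        ((∑ i, (f i (insert (o t) (Aset (t : ℕ))) - f i (Aset (t : ℕ)))) +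
         (FA ((t : ℕ) + 1) - FA (t : ℕ))) := by
      simp only [hFOdef, hFAdef, Finset.sum_add_distrib, Finset.sum_sub_distrib]
    rw [hexp] at hsum
    have : FO (t : ℕ) - FA (t : ℕ) ≤ (FO ((t : ℕ) + 1) - FA ((t : ℕ) + 1)) +
        ((1 / η) * (FA ((t : ℕ) + 1) - FA (t : ℕ)) + (FA ((t : ℕ) + 1) - FA (t : ℕ))) := by
      linarith
    linarith
  -- telescope
  have htel : (FO 0 - FA 0) - (FO n - FA n) ≤ (1 + 1 / η) * (FA n - FA 0) := by
    have h1 : ∑ k ∈ Finset.range n,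
        ((FO k - FA k) - (FO (k + 1) - FA (k + 1))) = (FO 0 - FA 0) - (FO n - FA n) :=
      Finset.sum_range_sub' (fun k => FO k - FA k) n
    have h2 : ∑ k ∈ Finset.range n, (FA (k + 1) - FA k) = FA n - FA 0 :=
      Finset.sum_range_sub FA n
    calc (FO 0 - FA 0) - (FO n - FA n)
        = ∑ k ∈ Finset.range n, ((FO k - FA k) - (FO (k + 1) - FA (k + 1))) := h1.symm
      _ ≤ ∑ k ∈ Finset.range n, (1 + 1 / η) * (FA (k + 1) - FA k) := by
          apply Finset.sum_le_sum
          intro k hk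
          have hkn : k < n := Finset.mem_range.mp hk
          exact hstep ⟨k, hkn⟩
      _ = (1 + 1 / η) * (FA n - FA 0) := by rw [← Finset.mul_sum, h2]
  have hFA0 : FA 0 = 0 := by
    simp only [hFAdef]
    simp [hA0, hzero]
  have hFOn : FO n = FA n := by
    simp only [hFOdef, hFAdef]
    simp [hOn]
  have hFO0 : FO 0 = ∑ i, f i (Finset.univ.image o) := by
    simp only [hFOdef]
    simp [hA0, hO0]
  have hFAn : FA n = ∑ i, f i (Finset.univ.image ALG) := by
    simp only [hFAdef]
    rw [hAn]
  have hmain : ∑ i, f i (Finset.univ.image o) ≤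
      (1 + 1 / η) * ∑ i, f i (Finset.univ.image ALG) := by
    rw [← hFO0, ← hFAn]
    rw [hFA0, hFOn] at htel
    linarith
  have hc : (0 : ℝ) < 1 + 1 / η := by positivity
  rw [ge_iff_le]
  calc (1 + 1 / η)⁻¹ * ∑ i, f i (Finset.univ.image o)
      ≤ (1 + 1 / η)⁻¹ * ((1 + 1 / η) * ∑ i, f i (Finset.univ.image ALG)) := by
        apply mul_le_mul_of_nonneg_left hmain (inv_nonneg.mpr hc.le)
    _ = ∑ i, f i (Finset.univ.image ALG) := by
        rw [inv_mul_cancel_left₀ hc.ne']
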